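/- If each of the matrices P1, P2, P3, P4 has full column rank k, then rank(A) ≤ rank(B) = rank(C). Moreover, the inequality rank(A) < rank(B) is strict unless every row and every column of P_HG contains at most one nonzero entry (i.e., unless the relationship between the hidden variables is deterministic). -/

import Mathlib

open Matrix Finset

section Helpers

lemma inj_mulVecLin_of_rank {a b : ℕ} (P : Matrix (Fin a) (Fin b) ℝ) (h : P.rank = b) :
    Function.Injective P.mulVecLin := by
  rw [← LinearMap.ker_eq_bot]
  have h2 := LinearMap.finrank_range_add_finrank_ker P.mulVecLin
  simp only [Module.finrank_fin_fun] at h2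
  simp only [Matrix.rank] at h
  rw [h] at h2
  have h0 : Module.finrank ℝ (LinearMap.ker P.mulVecLin) = 0 := by omega
  exact Submodule.finrank_eq_zero.mp h0

lemma rank_mul_right_of_injective {l m n : Type*} [Fintype l] [Fintype m] [Fintype n]
    (P : Matrix l m ℝ) (M : Matrix m n ℝ) (h : Function.Injective P.mulVecLin) :
    (P * M).rank = M.rank := by
  simp only [Matrix.rank]
  rw [Matrix.mulVecLin_mul, LinearMap.range_comp]
  exact ((Submodule.equivMapOfInjective P.mulVecLin h (LinearMap.range M.mulVecLin)).finrank_eq).symm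

lemma kron_injective {n k : ℕ} (P Q : Matrix (Fin n) (Fin k) ℝ)
    (hP : Function.Injective P.mulVecLin) (hQ : Function.Injective Q.mulVecLin) :
    Function.Injective
      (Matrix.mulVecLin (Matrix.of fun (p : Fin n × Fin n) (q : Fin k × Fin k) =>
        P p.1 q.1 * Q p.2 q.2)) := by
  rw [← LinearMap.ker_eq_bot, LinearMap.ker_eq_bot']
  intro v hv
  have hv' : ∀ x1 x3, ∑ q : Fin k × Fin k, P x1 q.1 * Q x3 q.2 * v q = 0 := by
    intro x1 x3
    have := congrFun hv (x1, x3)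
    simpa [Matrix.mulVecLin_apply, Matrix.mulVec, dotProduct] using this
  have step1 : ∀ x3, (fun h => ∑ g, Q x3 g * v (h, g)) = (0 : Fin k → ℝ) := by
    intro x3
    apply hP
    rw [map_zero]
    funext x1
    simp only [Matrix.mulVecLin_apply, Matrix.mulVec, dotProduct, Pi.zero_apply]
    rw [← hv' x1 x3, Fintype.sum_prod_type]
    refine Finset.sum_congr rfl fun h _ => ?_
    rw [Finset.mul_sum]
    exact Finset.sum_congr rfl fun g _ => by ring
  have step2 : ∀ h, (fun g => v (h, g)) = (0 : Fin k → ℝ) := by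
    intro h
    apply hQ
    rw [map_zero]
    funext x3
    simp only [Matrix.mulVecLin_apply, Matrix.mulVec, dotProduct, Pi.zero_apply]
    exact congrFun (step1 x3) h
  funext q
  exact congrFun (step2 q.1) q.2

open Classical in
lemma rank_le_card_nonzero_rows {a b : Type*} [Fintype a] [Fintype b] [DecidableEq a]
    (M : Matrix a b ℝ) :
    M.rank ≤ (Finset.univ.filter fun h : a => ∃ g, M h g ≠ 0).card := by
  classical
  set s : Finset a := Finset.univ.filter fun h : a => ∃ g, M h g ≠ 0 with hs
  let U : Matrix a {x // x ∈ s} ℝ := Matrix.of fun h h' => if h = (h' : a) then 1 else 0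
  let N : Matrix {x // x ∈ s} b ℝ := Matrix.of fun h' g => M h' g
  have hM : M = U * N := by
    ext h g
    rw [Matrix.mul_apply]
    by_cases hh : ∃ g', M h g' ≠ 0
    · have hmem : h ∈ s := by simp [hs, hh]
      rw [Finset.sum_eq_single (⟨h, hmem⟩ : {x // x ∈ s})]
      · simp [U, N]
      · intro b' _ hb'
        have : h ≠ (b' : a) := fun e => hb' (Subtype.ext e.symm)
        simp [U, this]
      · simp
    · push_neg at hh
      have hne : ∀ h' : {x // x ∈ s}, h ≠ (h' : a) := by
        intro h' e
        have hmem : (h' : a) ∈ Finset.univ.filter (fun h : a => ∃ g, M h g ≠ 0) := h'.2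
        obtain ⟨-, g', hg'⟩ := Finset.mem_filter.mp hmem
        rw [← e] at hg'
        exact hg' (hh g')
      simp [U, N, hne, hh]
  calc M.rank = (U * N).rank := by rw [← hM]
    _ ≤ N.rank := Matrix.rank_mul_le_right U N
    _ ≤ Fintype.card {x // x ∈ s} := Matrix.rank_le_card_height N
    _ = s.card := Fintype.card_coe s

lemma nnz_eq_sum {a b : Type*} [Fintype a] [Fintype b] (M : Matrix a b ℝ) :
    (Finset.univ.filter fun p : a × b => M p.1 p.2 ≠ 0).card
      = ∑ h : a, (Finset.univ.filter fun g : b => M h g ≠ 0).card := by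
  classical
  simp [Finset.card_filter, Fintype.sum_prod_type]

open Classical in
lemma rows_le_nnz {a b : Type*} [Fintype a] [Fintype b] (M : Matrix a b ℝ) :
    (Finset.univ.filter fun h : a => ∃ g, M h g ≠ 0).card
      ≤ (Finset.univ.filter fun p : a × b => M p.1 p.2 ≠ 0).card := by
  classical
  rw [nnz_eq_sum, Finset.card_filter]
  refine Finset.sum_le_sum fun h _ => ?_
  by_cases hh : ∃ g, M h g ≠ 0
  · obtain ⟨g, hg⟩ := hh
    have hpos : (Finset.univ.filter fun g : b => M h g ≠ 0).Nonempty :=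
      ⟨g, by simp [hg]⟩
    rw [if_pos ⟨g, hg⟩]
    exact Finset.card_pos.mpr hpos
  · simp [hh]

lemma rank_le_nnz {k : ℕ} (M : Matrix (Fin k) (Fin k) ℝ) :
    M.rank ≤ (Finset.univ.filter fun p : Fin k × Fin k => M p.1 p.2 ≠ 0).card :=
  le_trans (rank_le_card_nonzero_rows M) (rows_le_nnz M)

lemma rank_lt_nnz_row {k : ℕ} (M : Matrix (Fin k) (Fin k) ℝ)
    (h : ∃ h0 g g', g ≠ g' ∧ M h0 g ≠ 0 ∧ M h0 g' ≠ 0) :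
    M.rank < (Finset.univ.filter fun p : Fin k × Fin k => M p.1 p.2 ≠ 0).card := by
  classical
  obtain ⟨h0, g, g', hne, hg, hg'⟩ := h
  refine lt_of_le_of_lt (rank_le_card_nonzero_rows M) ?_
  rw [nnz_eq_sum, Finset.card_filter]
  refine Finset.sum_lt_sum (fun h _ => ?_) ⟨h0, Finset.mem_univ h0, ?_⟩
  · by_cases hh : ∃ g, M h g ≠ 0
    · obtain ⟨g1, hg1⟩ := hh
      have hpos : (Finset.univ.filter fun g : Fin k => M h g ≠ 0).Nonempty := ⟨g1, by simp [hg1]⟩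
      rw [if_pos ⟨g1, hg1⟩]
      exact Finset.card_pos.mpr hpos
    · simp [hh]
  · rw [if_pos ⟨g, hg⟩]
    exact Finset.one_lt_card.mpr ⟨g, by simp [hg], g', by simp [hg'], hne⟩

lemma nnz_transpose {k : ℕ} (M : Matrix (Fin k) (Fin k) ℝ) :
    (Finset.univ.filter fun p : Fin k × Fin k => Mᵀ p.1 p.2 ≠ 0).card
      = (Finset.univ.filter fun p : Fin k × Fin k => M p.1 p.2 ≠ 0).card := by
  classical
  refine Finset.card_bij' (fun p _ => Prod.swap p) (fun p _ => Prod.swap p) ?_ ?_ ?_ ?_ <;>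
    simp [Matrix.transpose_apply, Finset.mem_filter]
  · intro a b hab
    exact (Finset.mem_filter.mp hab).2
  · intro a b hab
    exact Finset.mem_filter.mpr ⟨Finset.mem_univ _, hab⟩

end Helpers

/-- If `P1, P2, P3, P4` have full column rank `k`, then `rank A ≤ rank B = rank C`, and the
inequality `rank A < rank B` is strict unless every row and every column of `P_HG` contains at
most one nonzero entry. -/
theorem rank_A_le_rank_B_eq_rank_C (n k : ℕ) (hn : 0 < n) (hk : 0 < k)
    (P1 P2 P3 P4 : Matrix (Fin n) (Fin k) ℝ) (PHG : Matrix (Fin k) (Fin k) ℝ)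
    (h1 : P1.rank = k) (h2 : P2.rank = k) (h3 : P3.rank = k) (h4 : P4.rank = k)
    (A B C : Matrix (Fin n × Fin n) (Fin n × Fin n) ℝ)
    (hA : ∀ x1 x2 x3 x4, A (x1, x2) (x3, x4) =
      ∑ h, ∑ g, P1 x1 h * P2 x2 h * PHG h g * P3 x3 g * P4 x4 g)
    (hB : ∀ x1 x2 x3 x4, B (x1, x3) (x2, x4) =
      ∑ h, ∑ g, P1 x1 h * P2 x2 h * PHG h g * P3 x3 g * P4 x4 g)
    (hC : ∀ x1 x2 x3 x4, C (x1, x4) (x2, x3) =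
      ∑ h, ∑ g, P1 x1 h * P2 x2 h * PHG h g * P3 x3 g * P4 x4 g) :
    A.rank ≤ B.rank ∧ B.rank = C.rank ∧
      (¬ ((∀ h g g', PHG h g ≠ 0 → PHG h g' ≠ 0 → g = g') ∧
          (∀ g h h', PHG h g ≠ 0 → PHG h' g ≠ 0 → h = h')) → A.rank < B.rank) := by
  classical
  have i1 := inj_mulVecLin_of_rank P1 h1
  have i2 := inj_mulVecLin_of_rank P2 h2
  have i3 := inj_mulVecLin_of_rank P3 h3
  have i4 := inj_mulVecLin_of_rank P4 h4
  set d : Fin k × Fin k → ℝ := fun q => PHG q.1 q.2 with hd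
  set nnz : ℕ := (Finset.univ.filter fun p : Fin k × Fin k => PHG p.1 p.2 ≠ 0).card with hnnz
  -- the Khatri-Rao / Kronecker factors
  set E : Matrix (Fin n × Fin n) (Fin k × Fin k) ℝ :=
    Matrix.of (fun p q => P1 p.1 q.1 * P3 p.2 q.2) with hE
  set F : Matrix (Fin n × Fin n) (Fin k × Fin k) ℝ :=
    Matrix.of (fun p q => P2 p.1 q.1 * P4 p.2 q.2) with hF
  set E' : Matrix (Fin n × Fin n) (Fin k × Fin k) ℝ :=
    Matrix.of (fun p q => P1 p.1 q.1 * P4 p.2 q.2) with hE'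
  set F' : Matrix (Fin n × Fin n) (Fin k × Fin k) ℝ :=
    Matrix.of (fun p q => P2 p.1 q.1 * P3 p.2 q.2) with hF'
  set M1 : Matrix (Fin n × Fin n) (Fin k) ℝ :=
    Matrix.of (fun p h => P1 p.1 h * P2 p.2 h) with hM1
  set M2 : Matrix (Fin n × Fin n) (Fin k) ℝ :=
    Matrix.of (fun q g => P3 q.1 g * P4 q.2 g) with hM2
  -- factorization of A
  have hAfac : A = M1 * (PHG * M2ᵀ) := by
    ext ⟨x1, x2⟩ ⟨x3, x4⟩
    rw [hA, Matrix.mul_apply]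
    refine Finset.sum_congr rfl fun h _ => ?_
    rw [Matrix.mul_apply, Finset.mul_sum]
    refine Finset.sum_congr rfl fun g _ => ?_
    simp only [hM1, hM2, Matrix.of_apply, Matrix.transpose_apply]
    ring
  -- factorization of B
  have hBfac : B = E * (Matrix.diagonal d * Fᵀ) := by
    ext ⟨x1, x3⟩ ⟨x2, x4⟩
    rw [hB, Matrix.mul_apply, Fintype.sum_prod_type]
    refine Finset.sum_congr rfl fun h _ => ?_
    refine Finset.sum_congr rfl fun g _ => ?_
    rw [Matrix.diagonal_mul, Matrix.transpose_apply]
    simp only [hE, hF, hd, Matrix.of_apply]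
    ring
  -- factorization of C
  have hCfac : C = E' * (Matrix.diagonal d * F'ᵀ) := by
    ext ⟨x1, x4⟩ ⟨x2, x3⟩
    rw [hC, Matrix.mul_apply, Fintype.sum_prod_type]
    refine Finset.sum_congr rfl fun h _ => ?_
    refine Finset.sum_congr rfl fun g _ => ?_
    rw [Matrix.diagonal_mul, Matrix.transpose_apply]
    simp only [hE', hF', hd, Matrix.of_apply]
    ring
  have hrankD : (Matrix.diagonal d).rank = nnz := by
    rw [Matrix.rank_diagonal, Fintype.card_subtype]
  have hrB : B.rank = nnz := by
    rw [hBfac, rank_mul_right_of_injective _ _ (kron_injective P1 P3 i1 i3),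
      ← Matrix.rank_transpose, Matrix.transpose_mul, Matrix.transpose_transpose,
      Matrix.diagonal_transpose, rank_mul_right_of_injective _ _ (kron_injective P2 P4 i2 i4)]
    exact hrankD
  have hrC : C.rank = nnz := by
    rw [hCfac, rank_mul_right_of_injective _ _ (kron_injective P1 P4 i1 i4),
      ← Matrix.rank_transpose, Matrix.transpose_mul, Matrix.transpose_transpose,
      Matrix.diagonal_transpose, rank_mul_right_of_injective _ _ (kron_injective P2 P3 i2 i3)]
    exact hrankD
  have hAH : A.rank ≤ PHG.rank := by
    rw [hAfac]
    exact le_trans (Matrix.rank_mul_le_right _ _) (Matrix.rank_mul_le_left _ _)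
  refine ⟨?_, ?_, ?_⟩
  · rw [hrB]
    exact le_trans hAH (rank_le_nnz PHG)
  · rw [hrB, hrC]
  · intro hcond
    rw [not_and_or] at hcond
    rw [hrB]
    have hlt : PHG.rank < nnz := by
      rcases hcond with hrow | hcol
      · push_neg at hrow
        obtain ⟨h0, g, g', hg, hg', hne⟩ := hrow
        exact rank_lt_nnz_row PHG ⟨h0, g, g', hne, hg, hg'⟩
      · push_neg at hcol
        obtain ⟨g0, h, h', hh, hh', hne⟩ := hcol
        have := rank_lt_nnz_row PHGᵀ ⟨g0, h, h', hne, hh, hh'⟩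
        rwa [Matrix.rank_transpose, nnz_transpose] at this
    exact lt_of_le_of_lt hAH hlt
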